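/- arXiv:2605.25104 — 4 statements merged into one kernel-verified Lean document; each statement's English description precedes it below -/
import Mathlib

section
/- Let f : ℝ² → ℍ have polar form f(x) = ρ(x)q(x) with ρ(x) = |f(x)| and |q(x)| = 1 for all x, and suppose ρ and q are differentiable in the x_k direction at x, for k ∈ {1,2}. Then |(∂f/∂x_k)(x)|² = ((∂ρ/∂x_k)(x))² + ρ(x)² · |(∂q/∂x_k)(x) q̄(x)|². -/
noncomputable section
open MeasureTheory Real Filter

/-- The real quaternions. -/
abbrev H := Quaternion ℝ

/-- The imaginary unit `i`. -/
def qi : H := ⟨0, 1, 0, 0⟩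
/-- The imaginary unit `j`. -/
def qj : H := ⟨0, 0, 1, 0⟩
/-- `e₁ = i`, `e₂ = j`. -/
def ek (k : Fin 2) : H := if k = 0 then qi else qj

/-- The scalar part of a quaternion. -/
def Sc (p : H) : ℝ := p.re

/-- Embedding of `ℂ` onto the commutative subalgebra `ℝ + ℝi` of `ℍ`. -/
def toQi (z : ℂ) : H := ⟨z.re, z.im, 0, 0⟩
/-- Embedding of `ℂ` onto the commutative subalgebra `ℝ + ℝj` of `ℍ`. -/
def toQj (z : ℂ) : H := ⟨z.re, 0, z.im, 0⟩

/-- `C_α`: a fixed square root of `(1 - I cot α)/(2π)`, as a complex number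
(principal square root). -/
def Cc (α : ℝ) : ℂ := (((1 : ℂ) - Complex.I * Real.cot α) / (2 * Real.pi)) ^ ((1 : ℂ) / 2)

/-- The left kernel `K_{α₁}(x₁,w₁)`, lying in `ℝ + ℝi`. -/
def K1 (α x w : ℝ) : H :=
  toQi (Cc α * Complex.exp (Complex.I * (((x ^ 2 + w ^ 2) / 2) * Real.cot α - x * w / Real.sin α)))

/-- The right kernel `K_{α₂}(x₂,w₂)`, lying in `ℝ + ℝj`. -/
def K2 (α x w : ℝ) : H :=
  toQj (Cc α * Complex.exp (Complex.I * (((x ^ 2 + w ^ 2) / 2) * Real.cot α - x * w / Real.sin α)))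

/-- The two-sided quaternion fractional Fourier transform. -/
def QFrFT (α₁ α₂ : ℝ) (f : ℝ × ℝ → H) (w : ℝ × ℝ) : H :=
  ∫ x : ℝ × ℝ, K1 α₁ x.1 w.1 * f x * K2 α₂ x.2 w.2

/-- `α ∉ πℤ`. -/
def NotPiMultiple (α : ℝ) : Prop := ∀ n : ℤ, α ≠ n * Real.pi

/-- Coordinate direction vectors of `ℝ²`. -/
def dir (k : Fin 2) : ℝ × ℝ := if k = 0 then (1, 0) else (0, 1)
/-- The `k`-th coordinate of a point of `ℝ²`. -/
def coord (k : Fin 2) (x : ℝ × ℝ) : ℝ := if k = 0 then x.1 else x.2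
/-- The point whose `k`-th coordinate is `t` and whose other coordinate is `b`. -/
def pt (k : Fin 2) (t b : ℝ) : ℝ × ℝ := if k = 0 then (t, b) else (b, t)
/-- The coordinate line through `x` in the `k`-th direction. -/
def lineAt (k : Fin 2) (x : ℝ × ℝ) (t : ℝ) : ℝ × ℝ := pt k t (coord (1 - k) x)
/-- Partial derivative `∂g/∂x_k` of a quaternion-valued function. -/
def pd (k : Fin 2) (g : ℝ × ℝ → H) (x : ℝ × ℝ) : H := fderiv ℝ g x (dir k)
/-- Partial derivative `∂g/∂x_k` of a real-valued function. -/
def pdR (k : Fin 2) (g : ℝ × ℝ → ℝ) (x : ℝ × ℝ) : ℝ := fderiv ℝ g x (dir k)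
/-- The angle `α_k`. -/
def angk (α₁ α₂ : ℝ) (k : Fin 2) : ℝ := if k = 0 then α₁ else α₂

instance : StarModule ℝ H :=
  ⟨fun r a => by ext <;> simp [Quaternion.re_smul, Quaternion.imI_smul, Quaternion.imJ_smul,
    Quaternion.imK_smul]⟩

instance : ContinuousStar H := ⟨by
  have : (star : H → H) = fun a => ((2 * a.re : ℝ) : H) - a := by
    funext a; ext <;> simp [Quaternion.re_star] <;> ring
  rw [this]
  exact (Quaternion.continuous_coe.comp (continuous_const.mul Quaternion.continuous_re)).sub
    continuous_id⟩

/-- `|∂f/∂x_k|² = (∂ρ/∂x_k)² + ρ² |(∂q/∂x_k) q̄|²` for `f = ρ q` in polar form. -/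
theorem stmt1 (f : ℝ × ℝ → H) (ρ : ℝ × ℝ → ℝ) (q : ℝ × ℝ → H)
    (hρ : ∀ x, ρ x = ‖f x‖) (hq : ∀ x, ‖q x‖ = 1)
    (hpolar : ∀ x, f x = (ρ x : H) * q x)
    (x : ℝ × ℝ) (k : Fin 2) (dρ : ℝ) (dq df : H)
    (hdρ : HasDerivAt (fun t : ℝ => ρ (lineAt k x t)) dρ (coord k x))
    (hdq : HasDerivAt (fun t : ℝ => q (lineAt k x t)) dq (coord k x))
    (hdf : HasDerivAt (fun t : ℝ => f (lineAt k x t)) df (coord k x)) :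
    ‖df‖ ^ 2 = dρ ^ 2 + ρ x ^ 2 * ‖dq * star (q x)‖ ^ 2 := by
  have hline : lineAt k x (coord k x) = x := by
    fin_cases k <;> simp [lineAt, pt, coord]
  -- df = ρ x • dq + dρ • q x
  have hprod : HasDerivAt (fun t : ℝ => f (lineAt k x t))
      (ρ x • dq + dρ • q x) (coord k x) := by
    have h := hdρ.smul hdq
    rw [hline] at h
    have e : (fun t : ℝ => f (lineAt k x t)) = (fun t => ρ (lineAt k x t)) • fun t => q (lineAt k x t) := by
      funext t
      show f _ = ρ _ • q _
      rw [hpolar, Quaternion.coe_mul_eq_smul]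
    rw [e]
    exact h
  have hdf' : df = ρ x • dq + dρ • q x := hdf.unique hprod
  -- q * star q is constant 1 along the line
  have hconst : (fun t : ℝ => q (lineAt k x t) * star (q (lineAt k x t)))
      = fun _ => (1 : H) := by
    funext t
    rw [Quaternion.self_mul_star, Quaternion.normSq_eq_norm_mul_self, hq, one_mul,
      Quaternion.coe_one]
  have hzero : dq * star (q x) + q x * star dq = 0 := by
    have h := hdq.mul hdq.star
    rw [hline] at h
    rw [show ((fun t => q (lineAt k x t)) * fun t => star (q (lineAt k x t))) = fun t => q (lineAt k x t) * star (q (lineAt k x t)) from rfl, hconst] at h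
    exact (h.unique (hasDerivAt_const _ 1))
  set u := dq * star (q x) with hu
  have hstar : star u = q x * star dq := by
    rw [hu, star_mul, star_star]
  have hre : u.re = 0 := by
    have : (u + star u).re = 0 := by rw [hstar, hzero]; rfl
    have h2 : u.re + u.re = 0 := by
      simpa [Quaternion.re_add, Quaternion.re_star] using this
    linarith
  have hdq' : dq = u * q x := by
    rw [hu, mul_assoc, Quaternion.star_mul_self, Quaternion.normSq_eq_norm_mul_self, hq,
      one_mul, Quaternion.coe_one, mul_one]
  have hdf'' : df = ((dρ : H) + ρ x • u) * q x := by
    rw [hdf', hdq', add_mul, Quaternion.coe_mul_eq_smul, smul_mul_assoc, add_comm]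
  have hnorm : ‖df‖ ^ 2 = ‖(dρ : H) + ρ x • u‖ ^ 2 := by
    rw [hdf'', norm_mul, hq, mul_one]
  rw [hnorm]
  have key : ∀ a : H, ‖a‖ ^ 2 = Quaternion.normSq a := fun a => by
    rw [Quaternion.normSq_eq_norm_mul_self, sq]
  rw [key, key, Quaternion.normSq_def', Quaternion.normSq_def']
  simp only [Quaternion.re_add, Quaternion.imI_add, Quaternion.imJ_add, Quaternion.imK_add,
    Quaternion.re_coe, Quaternion.imI_coe, Quaternion.imJ_coe, Quaternion.imK_coe,
    Quaternion.re_smul, Quaternion.imI_smul, Quaternion.imJ_smul, Quaternion.imK_smul,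
    smul_eq_mul, hre]
  ring
end
end

section
/- Let ρ : ℝ² → [0,∞) be differentiable with ∫_{ℝ²} ρ(x)² dx = 1, and suppose for k ∈ {1,2} that x_k ρ ∈ L²(ℝ²), ∂ρ/∂x_k ∈ L²(ℝ²), and x_k ρ(x)² → 0 as x_k → ±∞ for almost every value of the other coordinate. Then for all angles α₁, α₂: (∫_{ℝ²} (x₁² + x₂²) ρ(x)² dx) · (∫_{ℝ²} (sin²α₁ ((∂ρ/∂x₁)(x))² + sin²α₂ ((∂ρ/∂x₂)(x))²) dx) ≥ (1/4)(sin α₁ + sin α₂)². -/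
noncomputable section
open MeasureTheory Real Filter

lemma mul_int {f g : ℝ × ℝ → ℝ} (hf : MemLp f 2 volume) (hg : MemLp g 2 volume) :
    Integrable (fun x => f x * g x) volume := by
  have h1 := hf.integrable_sq
  have h2 := hg.integrable_sq
  refine Integrable.mono' ((h1.add h2).const_mul (1/2))
    (hf.aestronglyMeasurable.mul hg.aestronglyMeasurable)
    (Filter.Eventually.of_forall fun x => ?_)
  rw [Real.norm_eq_abs]
  rw [abs_le]
  simp only [Pi.add_apply]
  constructor <;> nlinarith [sq_nonneg (f x - g x), sq_nonneg (f x + g x)]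

lemma ibp_line (f f' : ℝ → ℝ) (hd : ∀ t, HasDerivAt f (f' t) t)
    (hsq : Integrable (fun t => f t ^ 2)) (hprod : Integrable (fun t => t * f t * f' t))
    (hlim : Tendsto (fun t : ℝ => t * f t ^ 2) (cocompact ℝ) (nhds 0)) :
    ∫ t : ℝ, t * f t * f' t = -(1/2) * ∫ t : ℝ, f t ^ 2 := by
  have hg : ∀ t, HasDerivAt (fun s => s * f s ^ 2) (f t ^ 2 + 2 * (t * f t * f' t)) t := by
    intro t
    have h1 : HasDerivAt (fun s => f s ^ 2) (2 * f t * f' t) t := by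
      simpa using (hd t).fun_pow 2
    have h2 : HasDerivAt (fun s => s * f s ^ 2) (1 * f t ^ 2 + t * (2 * f t * f' t)) t := (hasDerivAt_id' t).fun_mul h1
    convert h2 using 1
    simp; ring
  have hint : Integrable (fun t : ℝ => f t ^ 2 + 2 * (t * f t * f' t)) :=
    hsq.add (hprod.const_mul 2)
  have hbot : Tendsto (fun t : ℝ => t * f t ^ 2) atBot (nhds 0) :=
    hlim.mono_left (by rw [cocompact_eq_atBot_atTop]; exact le_sup_left)
  have htop : Tendsto (fun t : ℝ => t * f t ^ 2) atTop (nhds 0) :=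
    hlim.mono_left (by rw [cocompact_eq_atBot_atTop]; exact le_sup_right)
  have h0 : ∫ t : ℝ, (f t ^ 2 + 2 * (t * f t * f' t)) = 0 - 0 :=
    integral_of_hasDerivAt_of_tendsto hg hint hbot htop
  rw [integral_add hsq (hprod.const_mul 2), integral_const_mul] at h0
  linarith
lemma deriv_line0 (ρ : ℝ × ℝ → ℝ) (hdiff : Differentiable ℝ ρ) (b t : ℝ) :
    HasDerivAt (fun s => ρ (s, b)) (pdR 0 ρ (t, b)) t := by
  have h := (hdiff (t, b)).hasFDerivAt.comp_hasDerivAt t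
    ((hasDerivAt_id t).prodMk (hasDerivAt_const t b))
  simpa [pdR, dir, Function.comp_def] using h

lemma deriv_line1 (ρ : ℝ × ℝ → ℝ) (hdiff : Differentiable ℝ ρ) (b t : ℝ) :
    HasDerivAt (fun s => ρ (b, s)) (pdR 1 ρ (b, t)) t := by
  have h := (hdiff (b, t)).hasFDerivAt.comp_hasDerivAt t
    ((hasDerivAt_const t b).prodMk (hasDerivAt_id t))
  simpa [pdR, dir, Function.comp_def] using h

lemma ibp0 (ρ : ℝ × ℝ → ℝ) (hdiff : Differentiable ℝ ρ)
    (hsqi : Integrable (fun x : ℝ × ℝ => ρ x ^ 2) volume)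
    (hnorm : (∫ x : ℝ × ℝ, ρ x ^ 2) = 1)
    (hpi : Integrable (fun x : ℝ × ℝ => x.1 * ρ x * pdR 0 ρ x) volume)
    (hdec : ∀ᵐ b : ℝ ∂(volume : Measure ℝ),
      Tendsto (fun t : ℝ => t * ρ (t, b) ^ 2) (cocompact ℝ) (nhds 0)) :
    ∫ x : ℝ × ℝ, x.1 * ρ x * pdR 0 ρ x = -(1/2) := by
  rw [Measure.volume_eq_prod ℝ ℝ] at hsqi hpi
  have hnorm' : (∫ x : ℝ × ℝ, ρ x ^ 2 ∂((volume : Measure ℝ).prod volume)) = 1 := by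
    rw [← Measure.volume_eq_prod ℝ ℝ]; exact hnorm
  have key : ∫ x : ℝ × ℝ, x.1 * ρ x * pdR 0 ρ x ∂((volume : Measure ℝ).prod volume)
      = -(1/2) := by
    rw [integral_prod_symm _ hpi]
    have heq : ∀ᵐ b : ℝ ∂(volume : Measure ℝ),
        (∫ t : ℝ, t * ρ (t, b) * pdR 0 ρ (t, b)) = -(1/2) * ∫ t : ℝ, ρ (t, b) ^ 2 := by
      filter_upwards [hsqi.prod_left_ae, hpi.prod_left_ae, hdec] with b h1 h2 h3
      exact ibp_line (fun t => ρ (t, b)) (fun t => pdR 0 ρ (t, b))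
        (deriv_line0 ρ hdiff b) h1 h2 h3
    rw [integral_congr_ae heq, integral_const_mul, ← integral_prod_symm _ hsqi, hnorm']
    norm_num
  rw [Measure.volume_eq_prod ℝ ℝ]; exact key

lemma ibp1 (ρ : ℝ × ℝ → ℝ) (hdiff : Differentiable ℝ ρ)
    (hsqi : Integrable (fun x : ℝ × ℝ => ρ x ^ 2) volume)
    (hnorm : (∫ x : ℝ × ℝ, ρ x ^ 2) = 1)
    (hpi : Integrable (fun x : ℝ × ℝ => x.2 * ρ x * pdR 1 ρ x) volume)
    (hdec : ∀ᵐ b : ℝ ∂(volume : Measure ℝ),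
      Tendsto (fun t : ℝ => t * ρ (b, t) ^ 2) (cocompact ℝ) (nhds 0)) :
    ∫ x : ℝ × ℝ, x.2 * ρ x * pdR 1 ρ x = -(1/2) := by
  rw [Measure.volume_eq_prod ℝ ℝ] at hsqi hpi
  have hnorm' : (∫ x : ℝ × ℝ, ρ x ^ 2 ∂((volume : Measure ℝ).prod volume)) = 1 := by
    rw [← Measure.volume_eq_prod ℝ ℝ]; exact hnorm
  have key : ∫ x : ℝ × ℝ, x.2 * ρ x * pdR 1 ρ x ∂((volume : Measure ℝ).prod volume)
      = -(1/2) := by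
    rw [integral_prod _ hpi]
    have heq : ∀ᵐ b : ℝ ∂(volume : Measure ℝ),
        (∫ t : ℝ, t * ρ (b, t) * pdR 1 ρ (b, t)) = -(1/2) * ∫ t : ℝ, ρ (b, t) ^ 2 := by
      filter_upwards [hsqi.prod_right_ae, hpi.prod_right_ae, hdec] with b h1 h2 h3
      exact ibp_line (fun t => ρ (b, t)) (fun t => pdR 1 ρ (b, t))
        (deriv_line1 ρ hdiff b) h1 h2 h3
    rw [integral_congr_ae heq, integral_const_mul, ← integral_prod _ hsqi, hnorm']
    norm_num
  rw [Measure.volume_eq_prod ℝ ℝ]; exact key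

lemma cs_bound (f g : ℝ × ℝ → ℝ) (hf : MemLp f 2 volume) (hg : MemLp g 2 volume)
    (hfg : (∫ x : ℝ × ℝ, f x * g x) = -(1/2)) :
    (1/4 : ℝ) ≤ (∫ x : ℝ × ℝ, f x ^ 2) * (∫ x : ℝ × ℝ, g x ^ 2) := by
  set a := ∫ x : ℝ × ℝ, f x ^ 2 with ha
  set b := ∫ x : ℝ × ℝ, g x ^ 2 with hb
  have hfi := hf.integrable_sq
  have hgi := hg.integrable_sq
  have hmi := mul_int hf hg
  have key : ∀ c : ℝ, 0 ≤ a - c + c ^ 2 * b := by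
    intro c
    have h0 : 0 ≤ ∫ x : ℝ × ℝ, (f x + c * g x) ^ 2 :=
      integral_nonneg fun x => sq_nonneg _
    have hi1 : Integrable (fun x : ℝ × ℝ => f x ^ 2 + (2 * c) * (f x * g x)) volume :=
      hfi.add (hmi.const_mul _)
    have hexp : (∫ x : ℝ × ℝ, (f x + c * g x) ^ 2)
        = a + (2 * c) * (∫ x : ℝ × ℝ, f x * g x) + c ^ 2 * b := by
      have e0 : (∫ x : ℝ × ℝ, (f x + c * g x) ^ 2)
          = ∫ x : ℝ × ℝ, (f x ^ 2 + (2 * c) * (f x * g x) + c ^ 2 * g x ^ 2) := by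
        congr 1; funext x; ring
      rw [e0, integral_add hi1 (hgi.const_mul _), integral_add hfi (hmi.const_mul _),
        integral_const_mul, integral_const_mul, ha, hb]
    rw [hexp, hfg] at h0; linarith
  have hbnn : 0 ≤ b := integral_nonneg fun x => sq_nonneg _
  rcases eq_or_lt_of_le hbnn with h | h
  · exfalso; have := key (a + 1); rw [← h] at this; linarith
  · have h1 := key (1 / (2 * b))
    have hb' : b ≠ 0 := ne_of_gt h
    have e1 : (1 / (2 * b)) ^ 2 * b = 1 / (4 * b) := by field_simp; ring
    rw [e1] at h1
    have h2 : 0 ≤ (a - 1 / (2 * b) + 1 / (4 * b)) * b := mul_nonneg h1 h.le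
    have e2 : (1 / (2 * b)) * b = 1 / 2 := by field_simp
    have e3 : (1 / (4 * b)) * b = 1 / 4 := by field_simp
    nlinarith [h2, e2, e3]
lemma combine_ineq (a₀ a₁ b₀ b₁ s₁ s₂ : ℝ) (ha₀ : 0 ≤ a₀) (ha₁ : 0 ≤ a₁)
    (hb₀ : 0 ≤ b₀) (hb₁ : 0 ≤ b₁) (H0 : (1/4 : ℝ) ≤ a₀ * b₀) (H1 : (1/4 : ℝ) ≤ a₁ * b₁) :
    (1/4 : ℝ) * (s₁ + s₂) ^ 2 ≤ (a₀ + a₁) * (s₁ ^ 2 * b₀ + s₂ ^ 2 * b₁) := by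
  set p := Real.sqrt (a₀ * b₁) with hp'
  set q := Real.sqrt (a₁ * b₀) with hq'
  have hp2 : p ^ 2 = a₀ * b₁ := Real.sq_sqrt (mul_nonneg ha₀ hb₁)
  have hq2 : q ^ 2 = a₁ * b₀ := Real.sq_sqrt (mul_nonneg ha₁ hb₀)
  have hM : ((1:ℝ)/4) ^ 2 ≤ (a₀ * b₁) * (a₁ * b₀) := by
    nlinarith [mul_le_mul H0 H1 (by norm_num : (0:ℝ) ≤ 1/4) (mul_nonneg ha₀ hb₀)]
  have hpq : (1/4 : ℝ) ≤ p * q := by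
    have hpqe : p * q = Real.sqrt ((a₀ * b₁) * (a₁ * b₀)) :=
      (Real.sqrt_mul (mul_nonneg ha₀ hb₁) _).symm
    rw [hpqe]
    exact (Real.le_sqrt (by norm_num)
      (mul_nonneg (mul_nonneg ha₀ hb₁) (mul_nonneg ha₁ hb₀))).mpr hM
  have h1 := mul_le_mul_of_nonneg_left H0 (sq_nonneg s₁)
  have h2 := mul_le_mul_of_nonneg_left H1 (sq_nonneg s₂)
  have expand : (a₀ + a₁) * (s₁ ^ 2 * b₀ + s₂ ^ 2 * b₁)
      = s₁ ^ 2 * (a₀ * b₀) + s₂ ^ 2 * (a₁ * b₁) + (s₂ ^ 2 * (a₀ * b₁) + s₁ ^ 2 * (a₁ * b₀)) := by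
    ring
  rw [expand]
  rcases le_or_gt 0 (s₁ * s₂) with hss | hss
  · have h3 : 2 * (s₁ * s₂) * (p * q) ≤ s₂ ^ 2 * (a₀ * b₁) + s₁ ^ 2 * (a₁ * b₀) := by
      nlinarith [sq_nonneg (s₂ * p - s₁ * q), hp2, hq2]
    have h4 := mul_le_mul_of_nonneg_left hpq hss
    nlinarith [h1, h2, h3, h4]
  · have h3 : -(2 * (s₁ * s₂)) * (p * q) ≤ s₂ ^ 2 * (a₀ * b₁) + s₁ ^ 2 * (a₁ * b₀) := by
      nlinarith [sq_nonneg (s₂ * p + s₁ * q), hp2, hq2]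
    have h4 : (s₁ * s₂) * (p * q) ≤ (s₁ * s₂) * (1/4) := mul_le_mul_of_nonpos_left hpq hss.le
    nlinarith [h1, h2, h3, h4]
/-- `(∫ (x₁²+x₂²) ρ²)(∫ (sin²α₁ (∂₁ρ)² + sin²α₂ (∂₂ρ)²)) ≥ (1/4)(sin α₁ + sin α₂)²`. -/
theorem stmt6 (ρ : ℝ × ℝ → ℝ) (hpos : ∀ x, 0 ≤ ρ x) (hdiff : Differentiable ℝ ρ)
    (hnorm : (∫ x : ℝ × ℝ, ρ x ^ 2) = 1)
    (hL2x : ∀ k : Fin 2, MemLp (fun x : ℝ × ℝ => coord k x * ρ x) 2 volume)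
    (hL2d : ∀ k : Fin 2, MemLp (fun x : ℝ × ℝ => pdR k ρ x) 2 volume)
    (hdecay : ∀ k : Fin 2, ∀ᵐ b : ℝ ∂(volume : Measure ℝ),
      Tendsto (fun t : ℝ => t * ρ (pt k t b) ^ 2) (cocompact ℝ) (nhds 0)) :
    ∀ α₁ α₂ : ℝ,
      (∫ x : ℝ × ℝ, (x.1 ^ 2 + x.2 ^ 2) * ρ x ^ 2) *
        (∫ x : ℝ × ℝ, (Real.sin α₁ ^ 2 * (pdR 0 ρ x) ^ 2 + Real.sin α₂ ^ 2 * (pdR 1 ρ x) ^ 2))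
      ≥ (1 / 4) * (Real.sin α₁ + Real.sin α₂) ^ 2 := by

  intro α₁ α₂
  set s₁ := Real.sin α₁ with hs₁
  set s₂ := Real.sin α₂ with hs₂
  have hsqi : Integrable (fun x : ℝ × ℝ => ρ x ^ 2) volume := by
    by_contra hc
    rw [integral_undef hc] at hnorm; norm_num at hnorm
  have hfx0 : MemLp (fun x : ℝ × ℝ => x.1 * ρ x) 2 volume := by
    have := hL2x 0; simpa [coord] using this
  have hfx1 : MemLp (fun x : ℝ × ℝ => x.2 * ρ x) 2 volume := by
    have := hL2x 1; simpa [coord] using this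
  have hg0 := hL2d 0
  have hg1 := hL2d 1
  have hmi0 : Integrable (fun x : ℝ × ℝ => x.1 * ρ x * pdR 0 ρ x) volume := mul_int hfx0 hg0
  have hmi1 : Integrable (fun x : ℝ × ℝ => x.2 * ρ x * pdR 1 ρ x) volume := mul_int hfx1 hg1
  have hdec0 : ∀ᵐ b : ℝ ∂(volume : Measure ℝ),
      Tendsto (fun t : ℝ => t * ρ (t, b) ^ 2) (cocompact ℝ) (nhds 0) := by
    filter_upwards [hdecay 0] with b h; simpa [pt] using h
  have hdec1 : ∀ᵐ b : ℝ ∂(volume : Measure ℝ),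
      Tendsto (fun t : ℝ => t * ρ (b, t) ^ 2) (cocompact ℝ) (nhds 0) := by
    filter_upwards [hdecay 1] with b h; simpa [pt] using h
  have hI0 : (∫ x : ℝ × ℝ, (x.1 * ρ x) * pdR 0 ρ x) = -(1/2) :=
    ibp0 ρ hdiff hsqi hnorm hmi0 hdec0
  have hI1 : (∫ x : ℝ × ℝ, (x.2 * ρ x) * pdR 1 ρ x) = -(1/2) :=
    ibp1 ρ hdiff hsqi hnorm hmi1 hdec1
  have H0 : (1/4 : ℝ) ≤ (∫ x : ℝ × ℝ, (x.1 * ρ x) ^ 2) * (∫ x : ℝ × ℝ, (pdR 0 ρ x) ^ 2) :=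
    cs_bound _ _ hfx0 hg0 hI0
  have H1 : (1/4 : ℝ) ≤ (∫ x : ℝ × ℝ, (x.2 * ρ x) ^ 2) * (∫ x : ℝ × ℝ, (pdR 1 ρ x) ^ 2) :=
    cs_bound _ _ hfx1 hg1 hI1
  set a₀ := ∫ x : ℝ × ℝ, (x.1 * ρ x) ^ 2 with ha₀'
  set a₁ := ∫ x : ℝ × ℝ, (x.2 * ρ x) ^ 2 with ha₁'
  set b₀ := ∫ x : ℝ × ℝ, (pdR 0 ρ x) ^ 2 with hb₀'
  set b₁ := ∫ x : ℝ × ℝ, (pdR 1 ρ x) ^ 2 with hb₁'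
  have ha₀ : 0 ≤ a₀ := integral_nonneg fun x => sq_nonneg _
  have ha₁ : 0 ≤ a₁ := integral_nonneg fun x => sq_nonneg _
  have hb₀ : 0 ≤ b₀ := integral_nonneg fun x => sq_nonneg _
  have hb₁ : 0 ≤ b₁ := integral_nonneg fun x => sq_nonneg _
  have e1 : (∫ x : ℝ × ℝ, (x.1 ^ 2 + x.2 ^ 2) * ρ x ^ 2) = a₀ + a₁ := by
    have e0 : (∫ x : ℝ × ℝ, (x.1 ^ 2 + x.2 ^ 2) * ρ x ^ 2)
        = ∫ x : ℝ × ℝ, ((x.1 * ρ x) ^ 2 + (x.2 * ρ x) ^ 2) := by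
      congr 1; funext x; ring
    rw [e0, integral_add hfx0.integrable_sq hfx1.integrable_sq]
  have e2 : (∫ x : ℝ × ℝ, (s₁ ^ 2 * (pdR 0 ρ x) ^ 2 + s₂ ^ 2 * (pdR 1 ρ x) ^ 2))
      = s₁ ^ 2 * b₀ + s₂ ^ 2 * b₁ := by
    rw [integral_add (hg0.integrable_sq.const_mul _) (hg1.integrable_sq.const_mul _),
      integral_const_mul, integral_const_mul]
  rw [ge_iff_le, e1, e2]
  exact combine_ineq a₀ a₁ b₀ b₁ s₁ s₂ ha₀ ha₁ hb₀ hb₁ H0 H1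
end
end

section
/- Let f : ℝ² → ℍ be a quaternion-valued Schwartz function (every real component of f is a Schwartz function on ℝ²) and α₁, α₂ ∉ πℤ. Then for every w ∈ ℝ²: F_{α₁,α₂}{∂f/∂x₂}(w) = −cot α₂ · F_{α₁,α₂}{x₂ f}(w) · j + w₂ csc α₂ · F_{α₁,α₂}{f}(w) · j, where the multiplications by j are on the right. -/
noncomputable section
open MeasureTheory Real Filter

lemma toQj_mul (z w : ℂ) : toQj (z * w) = toQj z * toQj w := by
  ext <;> simp only [Quaternion.re_mul, Quaternion.imI_mul, Quaternion.imJ_mul,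
    Quaternion.imK_mul] <;> simp [toQj, Complex.mul_re, Complex.mul_im]

lemma toQj_I : toQj Complex.I = qj := by ext <;> simp [toQj, qj]

lemma toQj_ofReal (r : ℝ) : toQj (r : ℂ) = r • (1 : H) := by
  ext <;> simp [toQj, Quaternion.re_one, Quaternion.imI_one, Quaternion.imJ_one, Quaternion.imK_one]

/-- toQj as a continuous ℝ-linear map -/
def toQjL : ℂ →L[ℝ] H :=
  LinearMap.toContinuousLinearMap
    { toFun := toQj
      map_add' := by intro a b; ext <;> simp only [Quaternion.re_add, Quaternion.imI_add, Quaternion.imJ_add, Quaternion.imK_add] <;> simp [toQj]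
      map_smul' := by intro r a; ext <;> simp only [Quaternion.re_smul, Quaternion.imI_smul, Quaternion.imJ_smul, Quaternion.imK_smul] <;> simp [toQj] }

lemma toQjL_apply (z : ℂ) : toQjL z = toQj z := rfl

lemma norm_toQj (z : ℂ) : ‖toQj z‖ = ‖z‖ := by
  have h1 : ‖toQj z‖ = Real.sqrt (Quaternion.normSq (toQj z)) := by
    rw [norm_eq_sqrt_real_inner, Quaternion.inner_self]
  rw [h1, Quaternion.normSq_def', Complex.norm_def, Complex.normSq_apply]
  simp [toQj]
  ring_nf

lemma norm_toQi (z : ℂ) : ‖toQi z‖ = ‖z‖ := by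
  have h1 : ‖toQi z‖ = Real.sqrt (Quaternion.normSq (toQi z)) := by
    rw [norm_eq_sqrt_real_inner, Quaternion.inner_self]
  rw [h1, Quaternion.normSq_def', Complex.norm_def, Complex.normSq_apply]
  simp [toQi]
  ring_nf


lemma arg_eq (α x w : ℝ) :
    Complex.I * (((x:ℂ) ^ 2 + (w:ℂ) ^ 2) / 2 * (Real.cot α : ℂ) - (x:ℂ) * (w:ℂ) / (Real.sin α : ℂ))
    = ((( (x ^ 2 + w ^ 2) / 2 * Real.cot α - x * w / Real.sin α : ℝ)) : ℂ) * Complex.I := by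
  push_cast; ring

lemma norm_K1 (α x w : ℝ) : ‖K1 α x w‖ = ‖Cc α‖ := by
  rw [K1, norm_toQi, norm_mul, arg_eq, Complex.norm_exp_ofReal_mul_I, mul_one]

lemma norm_K2 (α x w : ℝ) : ‖K2 α x w‖ = ‖Cc α‖ := by
  rw [K2, norm_toQj, norm_mul, arg_eq, Complex.norm_exp_ofReal_mul_I, mul_one]

lemma hasDerivAt_K2 (α w : ℝ) (t : ℝ) :
    HasDerivAt (fun s => K2 α s w)
      ((t * Real.cot α - w / Real.sin α) • (K2 α t w * qj)) t := by
  have hψ : HasDerivAt (fun s : ℝ => ((s ^ 2 + w ^ 2) / 2 * Real.cot α - s * w / Real.sin α : ℝ))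
      (t * Real.cot α - w / Real.sin α) t := by
    have h1 := ((((hasDerivAt_pow 2 t).add_const (w ^ 2)).div_const 2).mul_const (Real.cot α)).sub
        (((hasDerivAt_id t).mul_const w).div_const (Real.sin α))
    simp only [id] at h1
    refine h1.congr_deriv ?_
    norm_num
  have hz : HasDerivAt (fun s : ℝ =>
      Cc α * Complex.exp (Complex.I * (((s:ℂ) ^ 2 + (w:ℂ) ^ 2) / 2 * (Real.cot α : ℂ) - (s:ℂ) * (w:ℂ) / (Real.sin α : ℂ))))
      (Cc α * (Complex.exp (Complex.I * (((t:ℂ) ^ 2 + (w:ℂ) ^ 2) / 2 * (Real.cot α : ℂ) - (t:ℂ) * (w:ℂ) / (Real.sin α : ℂ)))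
        * (Complex.I * ((t * Real.cot α - w / Real.sin α : ℝ) : ℂ)))) t := by
    have harg : HasDerivAt (fun s : ℝ =>
        Complex.I * (((s:ℂ) ^ 2 + (w:ℂ) ^ 2) / 2 * (Real.cot α : ℂ) - (s:ℂ) * (w:ℂ) / (Real.sin α : ℂ)))
        (Complex.I * ((t * Real.cot α - w / Real.sin α : ℝ) : ℂ)) t := by
      have : HasDerivAt (fun s : ℝ =>
          ((( (s ^ 2 + w ^ 2) / 2 * Real.cot α - s * w / Real.sin α : ℝ)) : ℂ))
          (((t * Real.cot α - w / Real.sin α : ℝ)) : ℂ) t :=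
        hψ.ofReal_comp
      have he : (fun s : ℝ =>
          Complex.I * (((s:ℂ) ^ 2 + (w:ℂ) ^ 2) / 2 * (Real.cot α : ℂ) - (s:ℂ) * (w:ℂ) / (Real.sin α : ℂ)))
          = fun s : ℝ => ((( (s ^ 2 + w ^ 2) / 2 * Real.cot α - s * w / Real.sin α : ℝ)) : ℂ) * Complex.I := by
        funext s; exact arg_eq α s w
      rw [he]
      simpa [mul_comm] using this.mul_const Complex.I
    exact (harg.cexp).const_mul (Cc α)
  have := (toQjL.hasFDerivAt.comp_hasDerivAt t hz.hasFDerivAt.hasDerivAt)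
  refine HasDerivAt.congr_deriv this ?_; symm
  simp only [Function.comp_def, ContinuousLinearMap.toSpanSingleton_apply,
    ContinuousLinearMap.one_apply, one_smul, toQjL_apply]
  have : ((t * Real.cot α - w / Real.sin α : ℝ) : ℂ) = ((t * Real.cot α - w / Real.sin α : ℝ) : ℂ) := rfl
  rw [show Cc α * (Complex.exp _ * (Complex.I * ((t * Real.cot α - w / Real.sin α : ℝ) : ℂ)))
      = (Cc α * Complex.exp (Complex.I * (((t:ℂ) ^ 2 + (w:ℂ) ^ 2) / 2 * (Real.cot α : ℂ) - (t:ℂ) * (w:ℂ) / (Real.sin α : ℂ))) * Complex.I)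
        * ((t * Real.cot α - w / Real.sin α : ℝ) : ℂ) from by ring]
  rw [toQj_mul, toQj_mul, toQj_I]
  rw [toQj_ofReal]
  rw [K2]
  rw [mul_smul_comm, mul_one]

/-- toQi continuity helper -/
def toQiL : ℂ →L[ℝ] H :=
  LinearMap.toContinuousLinearMap
    { toFun := toQi
      map_add' := by intro a b; ext <;> simp only [Quaternion.re_add, Quaternion.imI_add, Quaternion.imJ_add, Quaternion.imK_add] <;> simp [toQi]
      map_smul' := by intro r a; ext <;> simp only [Quaternion.re_smul, Quaternion.imI_smul, Quaternion.imJ_smul, Quaternion.imK_smul] <;> simp [toQi] }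

lemma continuous_K1 (α w : ℝ) : Continuous fun t => K1 α t w := by
  have h : Continuous fun t : ℝ => Cc α * Complex.exp
      (Complex.I * (((t:ℂ) ^ 2 + (w:ℂ) ^ 2) / 2 * (Real.cot α : ℂ) - (t:ℂ) * (w:ℂ) / (Real.sin α : ℂ))) := by
    fun_prop
  exact toQiL.continuous.comp h

lemma continuous_K2 (α w : ℝ) : Continuous fun t => K2 α t w := by
  rw [continuous_iff_continuousAt]
  exact fun t => (hasDerivAt_K2 α w t).continuousAt

lemma schwartz_bound (G : SchwartzMap (ℝ × ℝ) H) :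
    ∃ C : ℝ, 0 ≤ C ∧ ∀ x : ℝ × ℝ, ‖G x‖ ≤ C / (1 + x.2 ^ 2) := by
  obtain ⟨C₀, hC₀⟩ := G.decay 0 0
  obtain ⟨C₂, hC₂⟩ := G.decay 2 0
  refine ⟨C₀ + C₂, by linarith [hC₀.1, hC₂.1], ?_⟩
  · intro x
    have h0 := hC₀.2 x; have h2 := hC₂.2 x
    rw [norm_iteratedFDeriv_zero] at h0 h2
    simp only [pow_zero, one_mul] at h0
    have hx2 : x.2 ^ 2 ≤ ‖x‖ ^ 2 := by
      have h2' : |x.2| ≤ ‖x‖ := by simpa [Real.norm_eq_abs] using norm_snd_le x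
      calc x.2 ^ 2 = |x.2| ^ 2 := (sq_abs _).symm
        _ ≤ ‖x‖ ^ 2 := pow_le_pow_left₀ (abs_nonneg _) h2' 2
    have hpos : (0:ℝ) < 1 + x.2 ^ 2 := by positivity
    rw [le_div_iff₀ hpos]
    have : x.2 ^ 2 * ‖G x‖ ≤ C₂ := le_trans (by nlinarith [norm_nonneg (G x)]) h2
    nlinarith [norm_nonneg (G x)]

lemma slice_integrable (G : SchwartzMap (ℝ × ℝ) H) (α₁ α₂ a w1 w2 : ℝ) :
    Integrable (fun t => K1 α₁ a w1 * G (a, t) * K2 α₂ t w2) := by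
  obtain ⟨C, hC0, hC⟩ := schwartz_bound G
  have hmeas : AEStronglyMeasurable (fun t => K1 α₁ a w1 * G (a, t) * K2 α₂ t w2) volume := by
    exact (Continuous.aestronglyMeasurable (by
      exact ((continuous_const.mul (G.continuous.comp
        (continuous_const.prodMk continuous_id))).mul (continuous_K2 α₂ w2))))
  refine ((integrable_inv_one_add_sq.const_mul (‖Cc α₁‖ * C * ‖Cc α₂‖)).mono' hmeas ?_)
  filter_upwards with t
  calc ‖K1 α₁ a w1 * G (a, t) * K2 α₂ t w2‖
      ≤ ‖K1 α₁ a w1 * G (a, t)‖ * ‖K2 α₂ t w2‖ := norm_mul_le _ _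
    _ ≤ ‖K1 α₁ a w1‖ * ‖G (a, t)‖ * ‖K2 α₂ t w2‖ := by
        gcongr; exact norm_mul_le _ _
    _ ≤ ‖Cc α₁‖ * (C / (1 + t ^ 2)) * ‖Cc α₂‖ := by
        rw [norm_K1, norm_K2]; gcongr; exact hC (a, t)
    _ = ‖Cc α₁‖ * C * ‖Cc α₂‖ * (1 + t ^ 2)⁻¹ := by ring

lemma slice_tendsto (G : SchwartzMap (ℝ × ℝ) H) (α₁ α₂ a w1 w2 : ℝ)
    (l : Filter ℝ) (hl : Tendsto (fun t : ℝ => (1 + t ^ 2)⁻¹) l (nhds 0)) :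
    Tendsto (fun t => K1 α₁ a w1 * G (a, t) * K2 α₂ t w2) l (nhds 0) := by
  obtain ⟨C, hC0, hC⟩ := schwartz_bound G
  have hb : ∀ t : ℝ, ‖K1 α₁ a w1 * G (a, t) * K2 α₂ t w2‖
      ≤ ‖Cc α₁‖ * C * ‖Cc α₂‖ * (1 + t ^ 2)⁻¹ := by
    intro t
    calc ‖K1 α₁ a w1 * G (a, t) * K2 α₂ t w2‖
        ≤ ‖K1 α₁ a w1 * G (a, t)‖ * ‖K2 α₂ t w2‖ := norm_mul_le _ _
      _ ≤ ‖K1 α₁ a w1‖ * ‖G (a, t)‖ * ‖K2 α₂ t w2‖ := by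
          gcongr; exact norm_mul_le _ _
      _ ≤ ‖Cc α₁‖ * (C / (1 + t ^ 2)) * ‖Cc α₂‖ := by
          rw [norm_K1, norm_K2]; gcongr; exact hC (a, t)
      _ = ‖Cc α₁‖ * C * ‖Cc α₂‖ * (1 + t ^ 2)⁻¹ := by ring
  exact squeeze_zero_norm hb (by simpa using hl.const_mul (‖Cc α₁‖ * C * ‖Cc α₂‖))

lemma tendsto_inv_one_add_sq_atTop : Tendsto (fun t : ℝ => (1 + t ^ 2)⁻¹) atTop (nhds 0) := by
  apply Tendsto.inv_tendsto_atTop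
  exact tendsto_atTop_add_const_left _ 1 (tendsto_pow_atTop two_ne_zero)

lemma tendsto_inv_one_add_sq_atBot : Tendsto (fun t : ℝ => (1 + t ^ 2)⁻¹) atBot (nhds 0) := by
  apply Tendsto.inv_tendsto_atTop
  apply tendsto_atTop_add_const_left
  have h1 : Tendsto (fun t : ℝ => t ^ 2) atTop atTop :=
    tendsto_pow_atTop (by norm_num)
  have h2 := h1.comp tendsto_neg_atBot_atTop
  have : ((fun t : ℝ => t ^ 2) ∘ Neg.neg) = fun t : ℝ => t ^ 2 := by
    funext t; simp [Function.comp, neg_sq]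
  rwa [this] at h2

lemma prod_integrable (G : SchwartzMap (ℝ × ℝ) H) (α₁ α₂ w1 w2 : ℝ) :
    Integrable (fun x : ℝ × ℝ => K1 α₁ x.1 w1 * G x * K2 α₂ x.2 w2) := by
  have hmeas : AEStronglyMeasurable (fun x : ℝ × ℝ => K1 α₁ x.1 w1 * G x * K2 α₂ x.2 w2) volume := by
    exact (Continuous.aestronglyMeasurable
      ((((continuous_K1 α₁ w1).comp continuous_fst).mul G.continuous).mul
        ((continuous_K2 α₂ w2).comp continuous_snd)))
  have hG : Integrable (fun x : ℝ × ℝ => ‖G x‖) volume := by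
    have := SchwartzMap.integrable (μ := (volume : Measure (ℝ × ℝ))) G
    exact this.norm
  refine (hG.const_mul (‖Cc α₁‖ * ‖Cc α₂‖)).mono' hmeas ?_
  filter_upwards with x
  calc ‖K1 α₁ x.1 w1 * G x * K2 α₂ x.2 w2‖
      ≤ ‖K1 α₁ x.1 w1 * G x‖ * ‖K2 α₂ x.2 w2‖ := norm_mul_le _ _
    _ ≤ ‖K1 α₁ x.1 w1‖ * ‖G x‖ * ‖K2 α₂ x.2 w2‖ := by gcongr; exact norm_mul_le _ _
    _ = ‖Cc α₁‖ * ‖Cc α₂‖ * ‖G x‖ := by rw [norm_K1, norm_K2]; ring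

lemma integral_mul_qj {X : Type*} [MeasurableSpace X] {μ : Measure X} {f : X → H}
    (hf : Integrable f μ) : ∫ x, f x * qj ∂μ = (∫ x, f x ∂μ) * qj := by
  have := ((ContinuousLinearMap.mul ℝ H).flip qj).integral_comp_comm hf
  simpa using this

lemma integral_deriv_zero (g g' : ℝ → H) (hd : ∀ t, HasDerivAt g (g' t) t)
    (hint : Integrable g') (htop : Tendsto g atTop (nhds 0))
    (hbot : Tendsto g atBot (nhds 0)) : ∫ t, g' t = 0 := by
  rw [← intervalIntegral.integral_Iic_add_Ioi (b := 0) hint.integrableOn hint.integrableOn]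
  rw [integral_Ioi_of_hasDerivAt_of_tendsto' (fun x _ => hd x) hint.integrableOn htop,
    integral_Iic_of_hasDerivAt_of_tendsto' (fun x _ => hd x) hint.integrableOn hbot]
  abel


def pdS (F : SchwartzMap (ℝ × ℝ) H) : SchwartzMap (ℝ × ℝ) H :=
  SchwartzMap.evalCLM (𝕜 := ℝ) (E := ℝ × ℝ) (G := H) (dir 1) (SchwartzMap.fderivCLM ℝ (ℝ × ℝ) H F)

lemma pdS_apply (F : SchwartzMap (ℝ × ℝ) H) (x : ℝ × ℝ) : pdS F x = pd 1 (⇑F) x := rfl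

def x2S (F : SchwartzMap (ℝ × ℝ) H) : SchwartzMap (ℝ × ℝ) H :=
  SchwartzMap.bilinLeftCLM ((ContinuousLinearMap.lsmul ℝ ℝ : ℝ →L[ℝ] H →L[ℝ] H).flip)
    ((ContinuousLinearMap.snd ℝ ℝ ℝ).hasTemperateGrowth) F

lemma x2S_apply (F : SchwartzMap (ℝ × ℝ) H) (x : ℝ × ℝ) : x2S F x = x.2 • F x := rfl

lemma hasDerivAt_slice (F : SchwartzMap (ℝ × ℝ) H) (a t : ℝ) :
    HasDerivAt (fun s => F (a, s)) (pd 1 (⇑F) (a, t)) t := by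
  have h1 : HasDerivAt (fun s : ℝ => ((a, s) : ℝ × ℝ)) (((0 : ℝ), (1 : ℝ))) t :=
    (hasDerivAt_const t a).prodMk (hasDerivAt_id t)
  have h2 := ((F.differentiable.differentiableAt).hasFDerivAt).comp_hasDerivAt t h1
  have hdir : dir 1 = ((0 : ℝ), (1 : ℝ)) := rfl
  rw [pd, hdir]
  exact h2

lemma hasDerivAt_phi (F : SchwartzMap (ℝ × ℝ) H) (α₁ α₂ a w1 w2 t : ℝ) :
    HasDerivAt (fun s => K1 α₁ a w1 * F (a, s) * K2 α₂ s w2)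
      (K1 α₁ a w1 * pd 1 (⇑F) (a, t) * K2 α₂ t w2
        + (t * Real.cot α₂ - w2 / Real.sin α₂) •
            (K1 α₁ a w1 * F (a, t) * K2 α₂ t w2 * qj)) t := by
  have h := ((hasDerivAt_slice F a t).mul (hasDerivAt_K2 α₂ w2 t)).const_mul (K1 α₁ a w1)
  have hfn : (fun s => K1 α₁ a w1 * F (a, s) * K2 α₂ s w2)
      = fun s => K1 α₁ a w1 * (F (a, s) * K2 α₂ s w2) := by
    funext s; rw [mul_assoc]
  rw [hfn]
  refine HasDerivAt.congr_deriv h ?_; symm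
  simp only [mul_add, mul_smul_comm, smul_mul_assoc, mul_assoc]

lemma inner_ibp (F : SchwartzMap (ℝ × ℝ) H) (α₁ α₂ a w1 w2 : ℝ) :
    ∫ t : ℝ, K1 α₁ a w1 * pd 1 (⇑F) (a, t) * K2 α₂ t w2
      = (-Real.cot α₂) • ((∫ t : ℝ, K1 α₁ a w1 * (t • F (a, t)) * K2 α₂ t w2) * qj)
        + (w2 / Real.sin α₂) • ((∫ t : ℝ, K1 α₁ a w1 * F (a, t) * K2 α₂ t w2) * qj) := by
  set c := Real.cot α₂ with hc
  set s := Real.sin α₂ with hs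
  have hA : Integrable (fun t => K1 α₁ a w1 * pd 1 (⇑F) (a, t) * K2 α₂ t w2) := by
    have := slice_integrable (pdS F) α₁ α₂ a w1 w2
    simpa only [pdS_apply] using this
  have hB : Integrable (fun t => K1 α₁ a w1 * (t • F (a, t)) * K2 α₂ t w2) := by
    have := slice_integrable (x2S F) α₁ α₂ a w1 w2
    simpa only [x2S_apply] using this
  have hY : Integrable (fun t => K1 α₁ a w1 * F (a, t) * K2 α₂ t w2) := by
    exact slice_integrable F α₁ α₂ a w1 w2
  have hBY : ∀ t : ℝ, K1 α₁ a w1 * (t • F (a, t)) * K2 α₂ t w2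
      = t • (K1 α₁ a w1 * F (a, t) * K2 α₂ t w2) := by
    intro t; rw [mul_smul_comm, smul_mul_assoc]
  have hBq : Integrable (fun t => c • ((K1 α₁ a w1 * (t • F (a, t)) * K2 α₂ t w2) * qj)) := by
    exact (hB.mul_const qj).smul c
  have hYq : Integrable (fun t => (w2 / s) • ((K1 α₁ a w1 * F (a, t) * K2 α₂ t w2) * qj)) := by
    exact (hY.mul_const qj).smul (w2 / s)
  have hD : Integrable (fun t => K1 α₁ a w1 * pd 1 (⇑F) (a, t) * K2 α₂ t w2
      + (c • ((K1 α₁ a w1 * (t • F (a, t)) * K2 α₂ t w2) * qj)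
        - (w2 / s) • ((K1 α₁ a w1 * F (a, t) * K2 α₂ t w2) * qj))) := by
    have hS : Integrable (fun t => c • ((K1 α₁ a w1 * (t • F (a, t)) * K2 α₂ t w2) * qj)
        - (w2 / s) • ((K1 α₁ a w1 * F (a, t) * K2 α₂ t w2) * qj)) := hBq.sub hYq
    exact hA.add hS
  have hzero : ∫ t : ℝ, (K1 α₁ a w1 * pd 1 (⇑F) (a, t) * K2 α₂ t w2
      + (c • ((K1 α₁ a w1 * (t • F (a, t)) * K2 α₂ t w2) * qj)
        - (w2 / s) • ((K1 α₁ a w1 * F (a, t) * K2 α₂ t w2) * qj))) = 0 := by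
    refine integral_deriv_zero (fun t => K1 α₁ a w1 * F (a, t) * K2 α₂ t w2) _
      (fun t => ?_) hD
      (slice_tendsto F α₁ α₂ a w1 w2 atTop tendsto_inv_one_add_sq_atTop)
      (slice_tendsto F α₁ α₂ a w1 w2 atBot tendsto_inv_one_add_sq_atBot)
    have h := hasDerivAt_phi F α₁ α₂ a w1 w2 t
    convert h using 1
    rw [hBY t]
    rw [sub_smul, smul_mul_assoc, smul_smul]
    rw [mul_comm c t]
  have hS : Integrable (fun t => c • ((K1 α₁ a w1 * (t • F (a, t)) * K2 α₂ t w2) * qj)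
      - (w2 / s) • ((K1 α₁ a w1 * F (a, t) * K2 α₂ t w2) * qj)) := hBq.sub hYq
  rw [integral_add hA hS, integral_sub hBq hYq,
    integral_smul, integral_smul, integral_mul_qj hB, integral_mul_qj hY] at hzero
  have := eq_neg_of_add_eq_zero_left hzero
  rw [this, neg_sub, neg_smul]
  abel



/-- derivative formula for the QFrFT in the second variable
(with right multiplication by `j`). -/
theorem stmt10 (F : SchwartzMap (ℝ × ℝ) H)
    (α₁ α₂ : ℝ) (hα₁ : NotPiMultiple α₁) (hα₂ : NotPiMultiple α₂) (w : ℝ × ℝ) :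
    QFrFT α₁ α₂ (fun x => pd 1 (⇑F) x) w
      = (-Real.cot α₂) • (QFrFT α₁ α₂ (fun x => x.2 • F x) w * qj)
        + (w.2 / Real.sin α₂) • (QFrFT α₁ α₂ (⇑F) w * qj) := by
  have hvol : (volume : Measure (ℝ × ℝ)) = ((volume : Measure ℝ).prod volume) :=
    rfl
  have hpd : (fun x : ℝ × ℝ => K1 α₁ x.1 w.1 * pd 1 (⇑F) x * K2 α₂ x.2 w.2)
      = fun x : ℝ × ℝ => K1 α₁ x.1 w.1 * (pdS F) x * K2 α₂ x.2 w.2 := by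
    funext x; rw [pdS_apply]
  have hx2 : (fun x : ℝ × ℝ => K1 α₁ x.1 w.1 * (x.2 • F x) * K2 α₂ x.2 w.2)
      = fun x : ℝ × ℝ => K1 α₁ x.1 w.1 * (x2S F) x * K2 α₂ x.2 w.2 := by
    funext x; rw [x2S_apply]
  have hIA : Integrable (fun x : ℝ × ℝ => K1 α₁ x.1 w.1 * pd 1 (⇑F) x * K2 α₂ x.2 w.2)
      ((volume : Measure ℝ).prod volume) := by
    rw [hpd, ← hvol]; exact prod_integrable (pdS F) α₁ α₂ w.1 w.2
  have hIB : Integrable (fun x : ℝ × ℝ => K1 α₁ x.1 w.1 * (x.2 • F x) * K2 α₂ x.2 w.2)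
      ((volume : Measure ℝ).prod volume) := by
    rw [hx2, ← hvol]; exact prod_integrable (x2S F) α₁ α₂ w.1 w.2
  have hIY : Integrable (fun x : ℝ × ℝ => K1 α₁ x.1 w.1 * F x * K2 α₂ x.2 w.2)
      ((volume : Measure ℝ).prod volume) := by
    rw [← hvol]; exact prod_integrable F α₁ α₂ w.1 w.2
  have h1 : QFrFT α₁ α₂ (fun x => pd 1 (⇑F) x) w
      = ∫ a : ℝ, ∫ t : ℝ, K1 α₁ a w.1 * pd 1 (⇑F) (a, t) * K2 α₂ t w.2 := by
    rw [QFrFT, hvol]; exact integral_prod _ hIA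
  have h2 : QFrFT α₁ α₂ (fun x => x.2 • F x) w
      = ∫ a : ℝ, ∫ t : ℝ, K1 α₁ a w.1 * (t • F (a, t)) * K2 α₂ t w.2 := by
    rw [QFrFT, hvol]; exact integral_prod _ hIB
  have h3 : QFrFT α₁ α₂ (⇑F) w
      = ∫ a : ℝ, ∫ t : ℝ, K1 α₁ a w.1 * F (a, t) * K2 α₂ t w.2 := by
    rw [QFrFT, hvol]; exact integral_prod _ hIY
  rw [h1, h2, h3]
  have hIBa : Integrable (fun a : ℝ => ∫ t : ℝ, K1 α₁ a w.1 * (t • F (a, t)) * K2 α₂ t w.2)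
      (volume : Measure ℝ) := by
    exact hIB.integral_prod_left
  have hIYa : Integrable (fun a : ℝ => ∫ t : ℝ, K1 α₁ a w.1 * F (a, t) * K2 α₂ t w.2)
      (volume : Measure ℝ) := by
    exact hIY.integral_prod_left
  have hstep : (fun a : ℝ => ∫ t : ℝ, K1 α₁ a w.1 * pd 1 (⇑F) (a, t) * K2 α₂ t w.2)
      = fun a : ℝ =>
        (-Real.cot α₂) • ((∫ t : ℝ, K1 α₁ a w.1 * (t • F (a, t)) * K2 α₂ t w.2) * qj)
        + (w.2 / Real.sin α₂) • ((∫ t : ℝ, K1 α₁ a w.1 * F (a, t) * K2 α₂ t w.2) * qj) := by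
    funext a; exact inner_ibp F α₁ α₂ a w.1 w.2
  rw [hstep]
  have hP : Integrable (fun a : ℝ =>
      (-Real.cot α₂) • ((∫ t : ℝ, K1 α₁ a w.1 * (t • F (a, t)) * K2 α₂ t w.2) * qj)) := by
    exact (hIBa.mul_const qj).smul (-Real.cot α₂)
  have hQ : Integrable (fun a : ℝ =>
      (w.2 / Real.sin α₂) • ((∫ t : ℝ, K1 α₁ a w.1 * F (a, t) * K2 α₂ t w.2) * qj)) := by
    exact (hIYa.mul_const qj).smul (w.2 / Real.sin α₂)
  rw [integral_add hP hQ, integral_smul, integral_smul, integral_mul_qj hIBa,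
    integral_mul_qj hIYa]
end
end

section
/- Let q : ℝ² → ℍ be twice continuously differentiable with |q(x)| = 1 for all x (in particular q(x) is invertible), and suppose there exist pure quaternions β₁, β₂ (quaternions with zero scalar part) such that ∂q/∂x_k (x) = β_k x_k q(x) for all x ∈ ℝ² and k = 1,2. Then β₁ and β₂ commute: β₁β₂ = β₂β₁. -/
noncomputable section
open MeasureTheory Real Filter

set_option synthInstance.maxHeartbeats 1000000 in
/-- if `∂q/∂x_k = β_k x_k q` with `β_k` pure quaternions and `|q| = 1`,
then `β₁β₂ = β₂β₁`. -/
theorem stmt17 (q : ℝ × ℝ → H) (hq2 : ContDiff ℝ 2 q) (hqn : ∀ x, ‖q x‖ = 1)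
    (β₁ β₂ : H) (hβ₁ : Sc β₁ = 0) (hβ₂ : Sc β₂ = 0)
    (h1 : ∀ x : ℝ × ℝ, pd 0 q x = x.1 • (β₁ * q x))
    (h2 : ∀ x : ℝ × ℝ, pd 1 q x = x.2 • (β₂ * q x)) :
    β₁ * β₂ = β₂ * β₁ := by
  have hqd : Differentiable ℝ q := hq2.differentiable (by norm_num)
  have hf'd : Differentiable ℝ (fderiv ℝ q) :=
    (hq2.fderiv_right (m := 1) (by norm_num)).differentiable one_ne_zero
  set x₀ : ℝ × ℝ := (1, 1) with hx₀
  -- mixed partials as second derivative applications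
  have key : ∀ k l : Fin 2, pd l (pd k q) x₀ = fderiv ℝ (fderiv ℝ q) x₀ (dir l) (dir k) := by
    intro k l
    have : pd k q = fun y => (fderiv ℝ q y) ((fun _ : ℝ × ℝ => dir k) y) := rfl
    rw [show pd l (pd k q) x₀ = fderiv ℝ (fun y => (fderiv ℝ q y) (dir k)) x₀ (dir l) from rfl]
    rw [fderiv_clm_apply (hf'd x₀) (differentiableAt_const _)]
    simp
  have sym : fderiv ℝ (fderiv ℝ q) x₀ (dir 1) (dir 0)
      = fderiv ℝ (fderiv ℝ q) x₀ (dir 0) (dir 1) :=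
    (hq2.contDiffAt.isSymmSndFDerivAt (by norm_num)).eq _ _
  have hmul : ∀ (β : H), Differentiable ℝ (fun y : ℝ × ℝ => β * q y) :=
    fun β => hqd.const_mul β
  -- compute pd 1 (pd 0 q) x₀
  have c1 : pd 1 (pd 0 q) x₀ = β₁ * (β₂ * q x₀) := by
    have hfun : pd 0 q = fun y : ℝ × ℝ => y.1 • (β₁ * q y) := funext h1
    rw [show pd 1 (pd 0 q) x₀ = fderiv ℝ (pd 0 q) x₀ (dir 1) from rfl, hfun]
    rw [fderiv_fun_smul (differentiable_fst.differentiableAt) ((hmul β₁) x₀)]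
    have hfst : fderiv ℝ (fun y : ℝ × ℝ => y.1) x₀ = ContinuousLinearMap.fst ℝ ℝ ℝ :=
      (hasFDerivAt_fst).fderiv
    have hcm : fderiv ℝ (fun y : ℝ × ℝ => β₁ * q y) x₀ = β₁ • fderiv ℝ q x₀ :=
      fderiv_const_mul (hqd x₀) β₁
    have hq1 : fderiv ℝ q x₀ ((0 : ℝ), (1 : ℝ)) = β₂ * q x₀ := by
      have := h2 x₀
      rw [show pd 1 q x₀ = fderiv ℝ q x₀ (dir 1) from rfl] at this
      simpa [dir, hx₀] using this
    have hx₁ : x₀.1 = 1 := rfl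
    simp [hfst, hcm, hq1, hx₁, dir, mul_assoc]
  have c2 : pd 0 (pd 1 q) x₀ = β₂ * (β₁ * q x₀) := by
    have hfun : pd 1 q = fun y : ℝ × ℝ => y.2 • (β₂ * q y) := funext h2
    rw [show pd 0 (pd 1 q) x₀ = fderiv ℝ (pd 1 q) x₀ (dir 0) from rfl, hfun]
    rw [fderiv_fun_smul (differentiable_snd.differentiableAt) ((hmul β₂) x₀)]
    have hsnd : fderiv ℝ (fun y : ℝ × ℝ => y.2) x₀ = ContinuousLinearMap.snd ℝ ℝ ℝ :=
      (hasFDerivAt_snd).fderiv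
    have hcm : fderiv ℝ (fun y : ℝ × ℝ => β₂ * q y) x₀ = β₂ • fderiv ℝ q x₀ :=
      fderiv_const_mul (hqd x₀) β₂
    have hq0 : fderiv ℝ q x₀ ((1 : ℝ), (0 : ℝ)) = β₁ * q x₀ := by
      have := h1 x₀
      rw [show pd 0 q x₀ = fderiv ℝ q x₀ (dir 0) from rfl] at this
      simpa [dir, hx₀] using this
    have hx₂ : x₀.2 = 1 := rfl
    simp [hsnd, hcm, hq0, hx₂, dir, mul_assoc]
  have heq : β₁ * (β₂ * q x₀) = β₂ * (β₁ * q x₀) := by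
    rw [← c1, ← c2, key 0 1, key 1 0, sym]
  have hq0 : q x₀ ≠ 0 := by
    intro h
    have := hqn x₀
    rw [h] at this
    simp at this
  have : β₁ * β₂ * q x₀ = β₂ * β₁ * q x₀ := by rw [mul_assoc, mul_assoc]; exact heq
  exact mul_right_cancel₀ hq0 this
end
end
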